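/- Indistinguishability of one ciphertext of bit 1 together with t−1 public-key copies from the maximally mixed state: for n ≥ 1 and t ≥ 1, D( (1/2^{n−1}) Σ_{k ∈ Ω_n} T_k , ((1/2^n)·1)^{⊗t} ) < √(2^t / 2^{n+1}), where T_k is the tensor product of the family that equals ρ_k^1 in the first slot and ρ_k^0 in the remaining t−1 slots. -/

import Mathlib

open Matrix Finset ComplexOrder

/-- Hamming weight of a bit string. -/
def hammingW {n : ℕ} (ν : Fin n → ZMod 2) : ℕ :=
  (Finset.univ.filter fun l => ν l = 1).card

/-- `Ω_n`: the bit strings of length `n` with odd Hamming weight. -/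
def Omega (n : ℕ) : Finset (Fin n → ZMod 2) :=
  Finset.univ.filter fun k => Odd (hammingW k)

/-- The public-key state `ρ_k^0`. -/
noncomputable def rho0 (n : ℕ) (k : Fin n → ZMod 2) :
    Matrix (Fin n → ZMod 2) (Fin n → ZMod 2) ℂ :=
  (1 / 2 ^ n : ℂ) •
    ∑ i : Fin n → ZMod 2, ∑ x : ZMod 2, Matrix.single i (i + x • k) (1 : ℂ)

/-- The ciphertext state `ρ_k^1` of the bit `1`. -/
noncomputable def rho1 (n : ℕ) (k : Fin n → ZMod 2) :
    Matrix (Fin n → ZMod 2) (Fin n → ZMod 2) ℂ :=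
  (1 / 2 ^ n : ℂ) •
    ∑ i : Fin n → ZMod 2, ∑ x : ZMod 2,
      ((-1 : ℂ) ^ x.val) • Matrix.single i (i + x • k) (1 : ℂ)

/-- Tensor product of a `t`-indexed family of matrices over index type `m`. -/
def tensT {t : ℕ} {m : Type*} [Fintype m] (ρ : Fin t → Matrix m m ℂ) :
    Matrix (Fin t → m) (Fin t → m) ℂ :=
  Matrix.of fun u v => ∏ s, ρ s (u s) (v s)

/-- `|A|` is the positive semidefinite square root of `AᴴA`. -/
noncomputable def matAbs {m : Type*} [Fintype m] [DecidableEq m] (A : Matrix m m ℂ) :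
    Matrix m m ℂ :=
  (Matrix.posSemidef_conjTranspose_mul_self A).1.eigenvectorUnitary.1 *
    Matrix.diagonal ((↑) ∘ Real.sqrt ∘ (Matrix.posSemidef_conjTranspose_mul_self A).1.eigenvalues) *
    (star (Matrix.posSemidef_conjTranspose_mul_self A).1.eigenvectorUnitary : Matrix m m ℂ)

/-- The trace norm `‖A‖_tr = tr |A|` (a real number). -/
noncomputable def traceNorm {m : Type*} [Fintype m] [DecidableEq m] (A : Matrix m m ℂ) : ℝ :=
  (matAbs A).trace.re


lemma zmod2_sum {M : Type*} [AddCommMonoid M] (f : ZMod 2 → M) :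
    ∑ x : ZMod 2, f x = f 0 + f 1 := Fin.sum_univ_two f

lemma zmod2_add_self (x : ZMod 2) : x + x = 0 := by revert x; decide

lemma pi_add_eq_zero {n : ℕ} (a b : Fin n → ZMod 2) : a + b = 0 ↔ a = b := by
  constructor
  · intro h; funext l
    have := congrFun h l
    have h2 := zmod2_add_self (b l)
    simp only [Pi.add_apply, Pi.zero_apply] at this
    calc a l = a l + (b l + b l) := by rw [h2, add_zero]
      _ = (a l + b l) + b l := by ring
      _ = b l := by rw [this, zero_add]
  · rintro rfl; funext l; simp [zmod2_add_self]

lemma pi_add_eq {n : ℕ} (a b k : Fin n → ZMod 2) : a + b = k ↔ b = a + k := by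
  constructor
  · rintro rfl; funext l; simp only [Pi.add_apply]
    rw [← add_assoc, zmod2_add_self, zero_add]
  · rintro rfl; funext l; simp only [Pi.add_apply]
    rw [← add_assoc, zmod2_add_self, zero_add]

/-- the factor function -/
def phi (n : ℕ) (e : ℂ) (k w : Fin n → ZMod 2) : ℂ :=
  (if w = 0 then 1 else 0) + e * (if w = k then 1 else 0)

lemma rho0_apply (n : ℕ) (k a b : Fin n → ZMod 2) :
    rho0 n k a b = (2 ^ n : ℂ)⁻¹ * phi n 1 k (a + b) := by
  have hstd : ∀ x : ZMod 2, ∀ i, Matrix.single i (i + x • k) (1:ℂ) a b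
      = if i = a then (if i + x • k = b then 1 else 0) else 0 := by
    intro x i
    rw [Matrix.single]; simp [Matrix.of_apply, ite_and]
  simp only [rho0, Matrix.smul_apply, Matrix.sum_apply, hstd, smul_eq_mul]
  rw [Finset.sum_comm]
  simp only [Finset.sum_ite_eq', Finset.mem_univ, if_true]
  rw [zmod2_sum (f := fun x => if a + x • k = b then (1:ℂ) else 0)]
  have h0 : a + (0 : ZMod 2) • k = a := by simp
  have h1 : a + (1 : ZMod 2) • k = a + k := by simp
  rw [h0, h1, phi]
  have e1 : (a = b) ↔ (a + b = 0) := (pi_add_eq_zero a b).symm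
  have e2 : (a + k = b) ↔ (a + b = k) := by rw [pi_add_eq a b k]; exact comm
  simp only [e1, e2, one_mul, one_div]

lemma rho1_apply (n : ℕ) (k a b : Fin n → ZMod 2) :
    rho1 n k a b = (2 ^ n : ℂ)⁻¹ * phi n (-1) k (a + b) := by
  have hstd : ∀ x : ZMod 2, ∀ i, (((-1 : ℂ) ^ x.val) • Matrix.single i (i + x • k) (1:ℂ)) a b
      = if i = a then (((-1 : ℂ) ^ x.val) * if i + x • k = b then 1 else 0) else 0 := by
    intro x i
    rw [Matrix.smul_apply, Matrix.single]
    simp [Matrix.of_apply, ite_and, mul_ite]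
  simp only [rho1, Matrix.smul_apply, Matrix.sum_apply, hstd, smul_eq_mul]
  rw [Finset.sum_comm]
  simp only [Finset.sum_ite_eq', Finset.mem_univ, if_true]
  rw [zmod2_sum (f := fun x => ((-1:ℂ) ^ x.val) * if a + x • k = b then (1:ℂ) else 0)]
  have h0 : a + (0 : ZMod 2) • k = a := by simp
  have h1 : a + (1 : ZMod 2) • k = a + k := by simp
  rw [h0, h1, phi]
  have e1 : (a = b) ↔ (a + b = 0) := (pi_add_eq_zero a b).symm
  have e2 : (a + k = b) ↔ (a + b = k) := by rw [pi_add_eq a b k]; exact comm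
  have hv0 : ((0 : ZMod 2)).val = 0 := rfl
  have hv1 : ((1 : ZMod 2)).val = 1 := rfl
  simp only [e1, e2, hv0, hv1, pow_zero, pow_one, one_mul, one_div]





lemma hammingW_cast {n : ℕ} (k : Fin n → ZMod 2) :
    (hammingW k : ZMod 2) = ∑ l, k l := by
  have hb : ∀ x : ZMod 2, (if x = 1 then (1 : ZMod 2) else 0) = x := by decide
  rw [hammingW, Finset.card_filter]
  push_cast
  simp only [Nat.cast_ite, Nat.cast_one, Nat.cast_zero, hb]

lemma odd_iff_cast {m : ℕ} : Odd m ↔ (m : ZMod 2) = 1 := by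
  rw [Nat.odd_iff]
  constructor
  · intro h
    rw [← Nat.mod_add_div m 2]
    push_cast
    rw [h, (by decide : (2 : ZMod 2) = 0)]
    simp
  · intro h
    by_contra hne
    have h0 : m % 2 = 0 := by omega
    rw [← Nat.mod_add_div m 2] at h
    push_cast at h
    rw [h0, (by decide : (2 : ZMod 2) = 0)] at h
    simp at h

lemma mem_Omega_iff {n : ℕ} (k : Fin n → ZMod 2) :
    k ∈ Omega n ↔ (∑ l, k l) = 1 := by
  rw [Omega, Finset.mem_filter]
  simp [odd_iff_cast, hammingW_cast]

lemma Omega_ne_zero {n : ℕ} {k : Fin n → ZMod 2} (hk : k ∈ Omega n) : k ≠ 0 := by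
  intro h
  rw [mem_Omega_iff, h] at hk
  simp at hk

lemma card_Omega {n : ℕ} (hn : 1 ≤ n) : (Omega n).card = 2 ^ (n - 1) := by
  classical
  set i0 : Fin n := ⟨0, hn⟩
  set e : Fin n → ZMod 2 := Pi.single i0 1 with he
  have hsum_e : ∑ l, e l = 1 := by simp [he, Finset.sum_pi_single']
  have hflip : ∀ k : Fin n → ZMod 2, ∑ l, (k + e) l = (∑ l, k l) + 1 := by
    intro k
    simp only [Pi.add_apply, Finset.sum_add_distrib, hsum_e]
  have hee : ∀ k : Fin n → ZMod 2, k + e + e = k := by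
    intro k; funext l
    simp [add_assoc, zmod2_add_self]
  -- bijection between Omega n and its complement
  have hcard : (Omega n).card
      = (Finset.univ.filter fun k : Fin n → ZMod 2 => ¬ Odd (hammingW k)).card := by
    apply Finset.card_bij' (fun k _ => k + e) (fun k _ => k + e)
    · intro k hk
      rw [Finset.mem_filter]
      refine ⟨Finset.mem_univ _, ?_⟩
      rw [Omega, Finset.mem_filter] at hk
      intro hodd
      rw [odd_iff_cast, hammingW_cast, hflip] at hodd
      have h1 : (∑ l, k l) = 1 := by
        rw [← odd_iff_cast.mp hk.2, hammingW_cast]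
      rw [h1] at hodd
      exact (by decide : ¬ ((1 : ZMod 2) + 1 = 1)) hodd
    · intro k hk
      rw [Finset.mem_filter] at hk
      rw [Omega, Finset.mem_filter]
      refine ⟨Finset.mem_univ _, ?_⟩
      rw [odd_iff_cast, hammingW_cast, hflip]
      have h0 : (∑ l, k l) = 0 := by
        have := hk.2
        rw [odd_iff_cast, hammingW_cast] at this
        revert this
        generalize (∑ l, k l) = x
        revert x; decide
      rw [h0]; decide
    · intro k _; exact hee k
    · intro k _; exact hee k
  have htot := Finset.card_filter_add_card_filter_not
    (s := (Finset.univ : Finset (Fin n → ZMod 2))) (p := fun k => Odd (hammingW k))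
  have huniv : (Finset.univ : Finset (Fin n → ZMod 2)).card = 2 ^ n := by
    simp [Finset.card_univ]
  have hO : (Omega n).card + (Omega n).card = 2 ^ n := by
    rw [← huniv, ← htot, ← hcard]
    rfl
  have : 2 ^ n = 2 * 2 ^ (n - 1) := by
    rw [← pow_succ']
    congr 1
    omega
  omega

lemma phi_zero (n : ℕ) (e : ℂ) (k : Fin n → ZMod 2) (hk : k ≠ 0) : phi n e k 0 = 1 := by
  simp [phi, (show ¬((0 : Fin n → ZMod 2) = k) from fun h => hk h.symm)]

lemma phi_mul_sum (n : ℕ) (e e' : ℂ) (k k' : Fin n → ZMod 2) (hk : k ≠ 0) (hk' : k' ≠ 0) :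
    ∑ w : Fin n → ZMod 2, phi n e k w * phi n e' k' w
      = 1 + (e * e') * (if k = k' then 1 else 0) := by
  have hpt : ∀ w, phi n e k w * phi n e' k' w
      = (if w = 0 then (1:ℂ) else 0)
        + (e * e') * (if w = k then (if k = k' then (1:ℂ) else 0) else 0) := by
    intro w
    by_cases h0 : w = 0
    · subst h0
      simp [phi, (show ¬((0 : Fin n → ZMod 2) = k) from fun h => hk h.symm),
        (show ¬((0 : Fin n → ZMod 2) = k') from fun h => hk' h.symm)]
    · by_cases hwk : w = k
      · by_cases hkk' : k = k'
        · have hwk2 : w = k' := by rw [hwk, hkk']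
          simp only [phi, if_pos hwk, if_pos hwk2, if_neg h0, if_pos hkk']
          ring
        · have hwk' : ¬ (w = k') := by rw [hwk]; exact hkk'
          simp only [phi, if_pos hwk, if_neg hwk', if_neg h0, if_neg hkk']
          ring
      · simp only [phi, if_neg hwk, if_neg h0]
        ring
  rw [Finset.sum_congr rfl (fun w _ => hpt w), Finset.sum_add_distrib, ← Finset.mul_sum]
  rw [Finset.sum_ite_eq' Finset.univ (0 : Fin n → ZMod 2) (fun _ => (1:ℂ)),
    Finset.sum_ite_eq' Finset.univ k (fun _ => (if k = k' then (1:ℂ) else 0))]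
  simp

noncomputable section
variable (n t : ℕ)

def eps (t : ℕ) (s : Fin t) : ℂ := if s.val = 0 then -1 else 1

lemma eps_sq (s : Fin t) : eps t s * eps t s = 1 := by
  unfold eps; by_cases h : s.val = 0 <;> simp [h]

def Pk (n t : ℕ) (k : Fin n → ZMod 2) (w : Fin t → Fin n → ZMod 2) : ℂ :=
  ∏ s, phi n (eps t s) k (w s)

lemma tensT_entry (k : Fin n → ZMod 2) (u v : Fin t → Fin n → ZMod 2) :
    tensT (fun s : Fin t => if s.val = 0 then rho1 n k else rho0 n k) u v
      = ((2:ℂ) ^ n)⁻¹ ^ t * Pk n t k (u + v) := by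
  have hfac : ∀ s : Fin t, (if s.val = 0 then rho1 n k else rho0 n k) (u s) (v s)
      = ((2:ℂ) ^ n)⁻¹ * phi n (eps t s) k (u s + v s) := by
    intro s
    by_cases h : s.val = 0 <;> simp [h, eps, rho0_apply, rho1_apply]
  rw [tensT, Matrix.of_apply, Finset.prod_congr rfl (fun s _ => hfac s),
    Finset.prod_mul_distrib, Finset.prod_const, Finset.card_univ, Fintype.card_fin, Pk]
  rfl

lemma tensT_id_entry (u v : Fin t → Fin n → ZMod 2) :
    tensT (fun _ : Fin t => (1 / 2 ^ n : ℂ) • (1 : Matrix (Fin n → ZMod 2) (Fin n → ZMod 2) ℂ)) u v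
      = ((2:ℂ) ^ n)⁻¹ ^ t * (if u = v then 1 else 0) := by
  rw [tensT, Matrix.of_apply]
  have : ∀ s : Fin t, ((1 / 2 ^ n : ℂ) • (1 : Matrix (Fin n → ZMod 2) (Fin n → ZMod 2) ℂ)) (u s) (v s)
      = ((2:ℂ) ^ n)⁻¹ * (if u s = v s then 1 else 0) := by
    intro s
    simp [Matrix.smul_apply, Matrix.one_apply]
  rw [Finset.prod_congr rfl (fun s _ => this s), Finset.prod_mul_distrib, Finset.prod_const,
    Finset.card_univ, Fintype.card_fin, Finset.prod_boole]
  congr 1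
  by_cases h : u = v
  · simp [h]
  · have : ¬ ∀ i ∈ Finset.univ, u i = v i := by
      simp only [Finset.mem_univ, true_implies]
      intro hall; exact h (funext hall)
    simp only [if_neg h]
    rw [if_neg this]

lemma Pk_mul_sum (k k' : Fin n → ZMod 2) (hk : k ≠ 0) (hk' : k' ≠ 0) :
    ∑ w : Fin t → Fin n → ZMod 2, Pk n t k w * Pk n t k' w
      = if k = k' then (2:ℂ) ^ t else 1 := by
  have h1 : ∀ w : Fin t → Fin n → ZMod 2, Pk n t k w * Pk n t k' w
      = ∏ s, (phi n (eps t s) k (w s) * phi n (eps t s) k' (w s)) := by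
    intro w; rw [Pk, Pk, ← Finset.prod_mul_distrib]
  rw [Finset.sum_congr rfl (fun w _ => h1 w)]
  rw [← Fintype.piFinset_univ,
    ← Finset.prod_univ_sum (fun _ : Fin t => (Finset.univ : Finset (Fin n → ZMod 2)))
      (fun s g => phi n (eps t s) k g * phi n (eps t s) k' g)]
  have h2 : ∀ s : Fin t, ∑ g : Fin n → ZMod 2, phi n (eps t s) k g * phi n (eps t s) k' g
      = 1 + (if k = k' then (1:ℂ) else 0) := by
    intro s
    rw [phi_mul_sum n _ _ k k' hk hk', eps_sq, one_mul]
  rw [Finset.prod_congr rfl (fun s _ => h2 s), Finset.prod_const, Finset.card_univ,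
    Fintype.card_fin]
  by_cases h : k = k'
  · simp [h]; norm_num
  · simp [h]

lemma Pk_zero (k : Fin n → ZMod 2) (hk : k ≠ 0) : Pk n t k 0 = 1 := by
  rw [Pk]
  rw [Finset.prod_congr rfl (fun s _ => by rw [Pi.zero_apply, phi_zero n _ k hk])]
  simp

end


variable {m : Type*} [Fintype m] [DecidableEq m]

lemma conj_trace_eq (U : Matrix m m ℂ) (hU : U ∈ Matrix.unitaryGroup m ℂ) (D : Matrix m m ℂ) :
    (U * D * star U).trace = D.trace := by
  rw [Matrix.trace_mul_cycle,
    (Matrix.mem_unitaryGroup_iff'.mp hU : star U * U = 1), Matrix.one_mul]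

lemma herm_trace (B : Matrix m m ℂ) (hB : B.IsHermitian) :
    B.trace = ∑ i, (hB.eigenvalues i : ℂ) := by
  conv_lhs => rw [hB.spectral_theorem, Unitary.conjStarAlgAut_apply]
  rw [conj_trace_eq _ (hB.eigenvectorUnitary).2]
  simp [Matrix.trace_diagonal]

lemma herm_sq_trace (B : Matrix m m ℂ) (hB : B.IsHermitian) :
    (B * B).trace = ∑ i, (hB.eigenvalues i : ℂ) ^ 2 := by
  conv_lhs => rw [hB.spectral_theorem, Unitary.conjStarAlgAut_apply]
  have h1 : (star (hB.eigenvectorUnitary : Matrix m m ℂ)) * (hB.eigenvectorUnitary : Matrix m m ℂ) = 1 :=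
    Matrix.mem_unitaryGroup_iff'.mp (hB.eigenvectorUnitary).2
  set U := (hB.eigenvectorUnitary : Matrix m m ℂ)
  set D := Matrix.diagonal ((RCLike.ofReal : ℝ → ℂ) ∘ hB.eigenvalues)
  have : U * D * star U * (U * D * star U) = U * (D * D) * star U := by
    simp only [Matrix.mul_assoc]
    rw [← Matrix.mul_assoc (star U) U (D * star U), h1, Matrix.one_mul]
  rw [this, conj_trace_eq _ (hB.eigenvectorUnitary).2]
  rw [Matrix.diagonal_mul_diagonal, Matrix.trace_diagonal]
  simp [Function.comp, sq]

lemma traceNorm_le_sqrt (A : Matrix m m ℂ) :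
    traceNorm A ≤ Real.sqrt ((Fintype.card m : ℝ) * (Aᴴ * A).trace.re) := by
  have hP := Matrix.posSemidef_conjTranspose_mul_self A
  have hBh := hP.1
  set f : m → ℝ := fun i => Real.sqrt (hBh.eigenvalues i) with hf
  have htr : traceNorm A = ∑ i, f i := by
    rw [traceNorm, matAbs, conj_trace_eq _ (hBh.eigenvectorUnitary).2, Matrix.trace_diagonal]
    simp [Complex.re_sum, f]
  have htr2 : ((Aᴴ * A).trace).re = ∑ i, f i ^ 2 := by
    rw [herm_trace _ hBh]
    simp only [Complex.re_sum, Complex.ofReal_re, f]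
    refine Finset.sum_congr rfl fun i _ => ?_
    rw [Real.sq_sqrt (hP.eigenvalues_nonneg i)]
  have hcs : (∑ i, f i) ^ 2 ≤ (Fintype.card m : ℝ) * ∑ i, f i ^ 2 := by
    simpa using sq_sum_le_card_mul_sum_sq (s := (univ : Finset m)) (f := f)
  have hnn : 0 ≤ traceNorm A := by
    rw [htr]; exact Finset.sum_nonneg fun i _ => Real.sqrt_nonneg _
  calc traceNorm A = Real.sqrt ((traceNorm A) ^ 2) := (Real.sqrt_sq hnn).symm
    _ ≤ Real.sqrt ((Fintype.card m : ℝ) * (Aᴴ * A).trace.re) := by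
        apply Real.sqrt_le_sqrt
        rw [htr, htr2]; exact hcs

section final

lemma char2_eq_zero_iff {V : Type*} [AddCommGroup V] (h : ∀ x : V, x + x = 0) (a b : V) :
    a + b = 0 ↔ a = b := by
  constructor
  · intro hh
    have hb : -b = b := neg_eq_of_add_eq_zero_left (h b)
    rw [eq_neg_of_add_eq_zero_left hh, hb]
  · rintro rfl; exact h a

lemma conj_phi (n : ℕ) (e : ℂ) (k w : Fin n → ZMod 2) :
    (starRingEnd ℂ) (phi n e k w) = phi n ((starRingEnd ℂ) e) k w := by
  unfold phi
  rw [map_add, _root_.map_mul, apply_ite (starRingEnd ℂ), apply_ite (starRingEnd ℂ),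
    _root_.map_one, map_zero]

lemma conj_eps (t : ℕ) (s : Fin t) : (starRingEnd ℂ) (eps t s) = eps t s := by
  unfold eps; by_cases h : s.val = 0 <;> simp [h]

lemma conj_Pk (n t : ℕ) (k : Fin n → ZMod 2) (w : Fin t → Fin n → ZMod 2) :
    (starRingEnd ℂ) (Pk n t k w) = Pk n t k w := by
  rw [Pk, map_prod]
  exact Finset.prod_congr rfl fun s _ => by rw [conj_phi, conj_eps]

/-- One ciphertext of the bit `1` together with `t − 1` public-key copies is
indistinguishable from the maximally mixed state. -/
theorem ciphertext_and_copies_indistinguishable (n t : ℕ) (hn : 1 ≤ n) (ht : 1 ≤ t) :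
    (1 / 2) * traceNorm
        (((1 / 2 ^ (n - 1) : ℂ) • ∑ k ∈ Omega n,
              tensT (fun s : Fin t => if s.val = 0 then rho1 n k else rho0 n k))
          - tensT (fun _ : Fin t =>
              (1 / 2 ^ n : ℂ) • (1 : Matrix (Fin n → ZMod 2) (Fin n → ZMod 2) ℂ)))
      < Real.sqrt (2 ^ t / 2 ^ (n + 1)) := by
  classical
  set Δ : Matrix (Fin t → Fin n → ZMod 2) (Fin t → Fin n → ZMod 2) ℂ :=
    ((1 / 2 ^ (n - 1) : ℂ) • ∑ k ∈ Omega n,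
        tensT (fun s : Fin t => if s.val = 0 then rho1 n k else rho0 n k))
      - tensT (fun _ : Fin t =>
          (1 / 2 ^ n : ℂ) • (1 : Matrix (Fin n → ZMod 2) (Fin n → ZMod 2) ℂ)) with hΔdef
  set A : ℂ := (1 / 2 ^ (n - 1) : ℂ) * ((2:ℂ) ^ n)⁻¹ ^ t with hA
  set B : ℂ := ((2:ℂ) ^ n)⁻¹ ^ t with hB
  set g : (Fin t → Fin n → ZMod 2) → ℂ :=
    fun w => A * (∑ k ∈ Omega n, Pk n t k w) - B * (if w = 0 then 1 else 0) with hg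
  have hHself : ∀ x : Fin t → Fin n → ZMod 2, x + x = 0 := by
    intro x; funext s l; exact zmod2_add_self _
  -- entry formula
  have hEntry : ∀ u v, Δ u v = g (u + v) := by
    intro u v
    rw [hΔdef]
    rw [Matrix.sub_apply, Matrix.smul_apply, Matrix.sum_apply]
    rw [Finset.sum_congr rfl (fun k _ => tensT_entry n t k u v), tensT_id_entry]
    rw [← Finset.mul_sum, hg]
    have : (if u = v then (1:ℂ) else 0) = (if u + v = 0 then 1 else 0) := by
      by_cases h : u = v
      · rw [if_pos h, if_pos ((char2_eq_zero_iff hHself u v).mpr h)]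
      · rw [if_neg h, if_neg (fun hh => h ((char2_eq_zero_iff hHself u v).mp hh))]
    rw [this]
    simp only [smul_eq_mul, ← hB]
    ring
  -- real entries
  have hconj : ∀ u v, (starRingEnd ℂ) (Δ u v) = Δ u v := by
    intro u v
    have hc2 : (starRingEnd ℂ) (2:ℂ) = 2 := by
      rw [Complex.conj_eq_iff_im]
      norm_num
    have hcB : (starRingEnd ℂ) B = B := by
      rw [hB]; rw [map_pow, map_inv₀, map_pow, hc2]
    have hcA : (starRingEnd ℂ) A = A := by
      rw [hA]; rw [_root_.map_mul, map_div₀, _root_.map_one, map_pow, hc2, hcB]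
    rw [hEntry u v, hg]
    simp only [map_sub, _root_.map_mul, map_sum, conj_Pk, apply_ite (starRingEnd ℂ),
      _root_.map_one, map_zero, hcA, hcB]
  -- the Frobenius norm computation
  have hcardΩ : ((Omega n).card : ℂ) = (2:ℂ) ^ (n - 1) := by
    rw [card_Omega hn]; push_cast; ring
  have hSk00 : ∀ k ∈ Omega n, Pk n t k 0 = 1 := fun k hk => Pk_zero n t k (Omega_ne_zero hk)
  set cΩ : ℂ := (2:ℂ) ^ (n - 1) with hcW
  have hS2 : ∑ w : Fin t → Fin n → ZMod 2, g w * g w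
      = A * A * (cΩ * (cΩ + ((2:ℂ) ^ t - 1))) - 2 * A * B * cΩ + B * B := by
    have hquad : ∀ w, g w * g w
        = A * A * ((∑ k ∈ Omega n, Pk n t k w) * (∑ k ∈ Omega n, Pk n t k w))
          - 2 * A * B * ((if w = 0 then (1:ℂ) else 0) * (∑ k ∈ Omega n, Pk n t k w))
          + B * B * (if w = 0 then 1 else 0) := by
      intro w
      rw [hg]
      by_cases h : w = 0 <;> simp only [if_pos, if_neg, h, if_true, if_false] <;> ring
    rw [Finset.sum_congr rfl (fun w _ => hquad w)]
    rw [Finset.sum_add_distrib, Finset.sum_sub_distrib, ← Finset.mul_sum, ← Finset.mul_sum,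
      ← Finset.mul_sum]
    have hT1 : ∑ w : Fin t → Fin n → ZMod 2,
        ((∑ k ∈ Omega n, Pk n t k w) * (∑ k ∈ Omega n, Pk n t k w))
        = cΩ * (cΩ + ((2:ℂ) ^ t - 1)) := by
      have hexp : ∀ w : Fin t → Fin n → ZMod 2,
          (∑ k ∈ Omega n, Pk n t k w) * (∑ k ∈ Omega n, Pk n t k w)
          = ∑ k ∈ Omega n, ∑ k' ∈ Omega n, Pk n t k w * Pk n t k' w := by
        intro w; rw [Finset.sum_mul_sum]
      rw [Finset.sum_congr rfl (fun w _ => hexp w), Finset.sum_comm]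
      have hinner : ∀ k ∈ Omega n,
          ∑ w : Fin t → Fin n → ZMod 2, ∑ k' ∈ Omega n, Pk n t k w * Pk n t k' w
          = cΩ + ((2:ℂ) ^ t - 1) := by
        intro k hk
        rw [Finset.sum_comm]
        have h3 : ∀ k' ∈ Omega n,
            ∑ w : Fin t → Fin n → ZMod 2, Pk n t k w * Pk n t k' w
            = 1 + ((2:ℂ) ^ t - 1) * (if k = k' then 1 else 0) := by
          intro k' hk'
          rw [Pk_mul_sum n t k k' (Omega_ne_zero hk) (Omega_ne_zero hk')]
          by_cases h : k = k' <;> simp [h]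
        rw [Finset.sum_congr rfl h3, Finset.sum_add_distrib, ← Finset.mul_sum,
          Finset.sum_const, Finset.sum_ite_eq (Omega n) k (fun _ => (1:ℂ)), if_pos hk]
        rw [nsmul_eq_mul, mul_one, hcardΩ]
        ring
      rw [Finset.sum_congr rfl hinner, Finset.sum_const, nsmul_eq_mul, hcardΩ]
    have hT2 : ∑ w : Fin t → Fin n → ZMod 2,
        ((if w = 0 then (1:ℂ) else 0) * (∑ k ∈ Omega n, Pk n t k w)) = cΩ := by
      have : ∀ w : Fin t → Fin n → ZMod 2,
          ((if w = 0 then (1:ℂ) else 0) * (∑ k ∈ Omega n, Pk n t k w))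
          = if w = 0 then (∑ k ∈ Omega n, Pk n t k w) else 0 := by
        intro w; by_cases h : w = 0 <;> simp [h]
      rw [Finset.sum_congr rfl (fun w _ => this w),
        Finset.sum_ite_eq' Finset.univ (0 : Fin t → Fin n → ZMod 2)
          (fun w => ∑ k ∈ Omega n, Pk n t k w), if_pos (Finset.mem_univ _)]
      rw [Finset.sum_congr rfl hSk00, Finset.sum_const, nsmul_eq_mul, mul_one, hcardΩ]
    have hT3 : ∑ w : Fin t → Fin n → ZMod 2, (if w = 0 then (1:ℂ) else 0) = 1 := by
      rw [Finset.sum_ite_eq' Finset.univ (0 : Fin t → Fin n → ZMod 2) (fun _ => (1:ℂ)),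
        if_pos (Finset.mem_univ _)]
    rw [hT1, hT2, hT3, mul_one]
  -- trace of Δᴴ * Δ
  have htrace : (Δᴴ * Δ).trace
      = (Fintype.card (Fin t → Fin n → ZMod 2) : ℂ)
        * (A * A * (cΩ * (cΩ + ((2:ℂ) ^ t - 1))) - 2 * A * B * cΩ + B * B) := by
    rw [Matrix.trace]
    have hdiag : ∀ v, (Δᴴ * Δ).diag v = ∑ u, Δ u v * Δ u v := by
      intro v
      rw [Matrix.diag_apply, Matrix.mul_apply]
      refine Finset.sum_congr rfl fun u _ => ?_
      rw [Matrix.conjTranspose_apply,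
        (show star (Δ u v) = (starRingEnd ℂ) (Δ u v) from rfl), hconj]
    rw [Finset.sum_congr rfl (fun v _ => hdiag v), Finset.sum_comm]
    have hrow : ∀ u, ∑ v, Δ u v * Δ u v
        = ∑ w : Fin t → Fin n → ZMod 2, g w * g w := by
      intro u
      rw [Finset.sum_congr rfl (fun v _ => by rw [hEntry u v])]
      exact (Fintype.sum_equiv (Equiv.addLeft u) _ _
        (fun w => by
          have : u + (u + w) = w := by rw [← add_assoc, hHself u, zero_add]
          simp only [Equiv.coe_addLeft, this])).symm
    rw [Finset.sum_congr rfl (fun u _ => hrow u), Finset.sum_const, nsmul_eq_mul, hS2,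
      Finset.card_univ]
  -- numeric conclusion
  have h2C : (2:ℂ) ≠ 0 := two_ne_zero
  have hXne : ((2:ℂ) ^ (n-1)) ≠ 0 := pow_ne_zero _ h2C
  have hYne : ((2:ℂ) ^ n) ≠ 0 := pow_ne_zero _ h2C
  have hYtne : (((2:ℂ) ^ n) ^ t) ≠ 0 := pow_ne_zero _ hYne
  set c : ℝ := ((2:ℝ) ^ t - 1) / ((2:ℝ) ^ (n-1) * ((2:ℝ) ^ n) ^ t) with hc
  have hcardHC : (Fintype.card (Fin t → Fin n → ZMod 2) : ℂ) = ((2:ℂ) ^ n) ^ t := by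
    rw [Fintype.card_fun, Fintype.card_fun, ZMod.card, Fintype.card_fin, Fintype.card_fin]
    push_cast; ring
  have htr_c : (Δᴴ * Δ).trace = ((c : ℝ) : ℂ) := by
    rw [htrace, hcardHC, hA, hB, hcW, hc]
    push_cast
    field_simp
    ring_nf
    rw [← mul_pow, inv_mul_cancel₀ h2C, one_pow]
    ring
  have htr_re : (Δᴴ * Δ).trace.re = c := by rw [htr_c, Complex.ofReal_re]
  have hcardHR : (Fintype.card (Fin t → Fin n → ZMod 2) : ℝ) = ((2:ℝ) ^ n) ^ t := by
    rw [Fintype.card_fun, Fintype.card_fun, ZMod.card, Fintype.card_fin, Fintype.card_fin]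
    push_cast; ring
  have h2Rn : ((2:ℝ) ^ (n-1)) ≠ 0 := pow_ne_zero _ two_ne_zero
  have h2Rt : (((2:ℝ) ^ n) ^ t) ≠ 0 := pow_ne_zero _ (pow_ne_zero _ two_ne_zero)
  have hprod : (Fintype.card (Fin t → Fin n → ZMod 2) : ℝ) * (Δᴴ * Δ).trace.re
      = ((2:ℝ) ^ t - 1) / (2:ℝ) ^ (n-1) := by
    rw [htr_re, hcardHR, hc]
    field_simp
  have hbound : traceNorm Δ ≤ Real.sqrt (((2:ℝ) ^ t - 1) / (2:ℝ) ^ (n-1)) := by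
    have := traceNorm_le_sqrt Δ
    rwa [hprod] at this
  have hpow4 : (2:ℝ) ^ (n+1) = 4 * (2:ℝ) ^ (n-1) := by
    rw [show n + 1 = (n-1) + 2 by omega, pow_add]
    ring
  have hsqrt_eq : (1/2 : ℝ) * Real.sqrt (((2:ℝ) ^ t - 1) / (2:ℝ) ^ (n-1))
      = Real.sqrt (((2:ℝ) ^ t - 1) / (2:ℝ) ^ (n+1)) := by
    have harg : ((2:ℝ) ^ t - 1) / (2:ℝ) ^ (n-1)
        = 4 * (((2:ℝ) ^ t - 1) / (2:ℝ) ^ (n+1)) := by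
      rw [hpow4]
      field_simp
    rw [harg, Real.sqrt_mul (by norm_num : (0:ℝ) ≤ 4),
      (show Real.sqrt 4 = 2 by
        rw [show (4:ℝ) = 2 ^ 2 by norm_num, Real.sqrt_sq (by norm_num : (0:ℝ) ≤ 2)])]
    ring
  have hlt : Real.sqrt (((2:ℝ) ^ t - 1) / (2:ℝ) ^ (n+1))
      < Real.sqrt ((2:ℝ) ^ t / (2:ℝ) ^ (n+1)) := by
    have h1t : (1:ℝ) ≤ 2 ^ t := one_le_pow₀ (by norm_num)
    have hden : (0:ℝ) < 2 ^ (n+1) := by positivity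
    apply Real.sqrt_lt_sqrt
    · apply div_nonneg (by linarith) (le_of_lt hden)
    · rw [div_lt_div_iff_of_pos_right hden]
      linarith
  calc (1/2 : ℝ) * traceNorm Δ
      ≤ (1/2 : ℝ) * Real.sqrt (((2:ℝ) ^ t - 1) / (2:ℝ) ^ (n-1)) := by
        apply mul_le_mul_of_nonneg_left hbound (by norm_num)
    _ = Real.sqrt (((2:ℝ) ^ t - 1) / (2:ℝ) ^ (n+1)) := hsqrt_eq
    _ < Real.sqrt ((2:ℝ) ^ t / (2:ℝ) ^ (n+1)) := hlt
    _ = Real.sqrt (2 ^ t / 2 ^ (n+1)) := by norm_num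

end final
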